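/- Let H be a group, h ∈ H non-trivial, G = H₁ ∗ H₂ the free product of two copies of H, and ρ : B₂ → Aut(G) the Artin type representation associated to (H,h). Then for every l ∈ ℤ with l ≠ 0, ρ(σ₁^{2l})(h₁) = (h₂h₁)^{−l} h₁ (h₂h₁)^{l} and this element is different from h₁; and for every l ∈ ℤ, ρ(σ₁^{2l+1})(h₁) = (h₂h₁)^{−l} h₁⁻¹ h₂ h₁ (h₂h₁)^{l} and this element is different from h₁. Consequently the representation ρ : B₂ → Aut(H₁ ∗ H₂) is faithful. -/

import Mathlib

def braidRels (m : ℕ) : Set (FreeGroup (Fin m)) :=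
  { r | (∃ i j : Fin m, (i : ℕ) + 1 = (j : ℕ) ∧
          r = FreeGroup.of i * FreeGroup.of j * FreeGroup.of i *
              (FreeGroup.of j * FreeGroup.of i * FreeGroup.of j)⁻¹) ∨
        (∃ i j : Fin m, (i : ℕ) + 2 ≤ (j : ℕ) ∧
          r = FreeGroup.of i * FreeGroup.of j * (FreeGroup.of j * FreeGroup.of i)⁻¹) }

abbrev BraidGroup (m : ℕ) : Type := PresentedGroup (braidRels m)

def braidGen {m : ℕ} (i : Fin m) : BraidGroup m := PresentedGroup.of i

def idx0 {n : ℕ} (k : Fin (n - 1)) : Fin n := ⟨k.1, by have := k.2; omega⟩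
def idx1 {n : ℕ} (k : Fin (n - 1)) : Fin n := ⟨k.1 + 1, by have := k.2; omega⟩

def IsArtinRep {n : ℕ} {H : Type} [Group H] (h : H)
    (ρ : BraidGroup (n - 1) →* MulAut (Monoid.CoprodI (fun _ : Fin n => H))) : Prop :=
  ∀ k : Fin (n - 1),
    (∀ y : H, ρ (braidGen k) (Monoid.CoprodI.of (i := idx0 k) y) =
        (Monoid.CoprodI.of (i := idx0 k) h)⁻¹ * Monoid.CoprodI.of (i := idx1 k) y *
          Monoid.CoprodI.of (i := idx0 k) h) ∧
    (∀ y : H, ρ (braidGen k) (Monoid.CoprodI.of (i := idx1 k) y) =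
        Monoid.CoprodI.of (i := idx0 k) h * Monoid.CoprodI.of (i := idx0 k) y *
          (Monoid.CoprodI.of (i := idx0 k) h)⁻¹) ∧
    (∀ j : Fin n, j ≠ idx0 k → j ≠ idx1 k →
      ∀ y : H, ρ (braidGen k) (Monoid.CoprodI.of (i := j) y) = Monoid.CoprodI.of (i := j) y)


theorem neword_prod_ne_one {ι : Type*} [DecidableEq ι] {M : ι → Type*} [∀ i, Monoid (M i)]
    [∀ i, DecidableEq (M i)] {i j : ι} (w : Monoid.CoprodI.NeWord M i j) : w.prod ≠ 1 := by
  intro hcontra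
  have h2 : w.toWord.prod = Monoid.CoprodI.Word.empty.prod := by
    rw [Monoid.CoprodI.Word.prod_empty]; exact hcontra
  have h3 : w.toWord = Monoid.CoprodI.Word.empty :=
    (Monoid.CoprodI.Word.equiv (M := M)).symm.injective h2
  exact w.toList_ne_nil (by rw [show w.toList = w.toWord.toList from rfl, h3]; rfl)

theorem exists_alt {H : Type} [Group H] (i j : Fin 2) (hij : i ≠ j) (x y : H)
    (hx : x ≠ 1) (hy : y ≠ 1) (m : ℕ) :
    ∃ w : Monoid.CoprodI.NeWord (fun _ : Fin 2 => H) i j,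
      w.prod = (Monoid.CoprodI.of (M := fun _ : Fin 2 => H) (i := i) x *
        Monoid.CoprodI.of (M := fun _ : Fin 2 => H) (i := j) y) ^ (m + 1) := by
  induction m with
  | zero => exact ⟨.append (.singleton x hx) hij (.singleton y hy), by simp⟩
  | succ n ih =>
    obtain ⟨w, hw⟩ := ih
    exact ⟨.append (.append (.singleton x hx) hij (.singleton y hy)) hij.symm w,
      by simp [hw, pow_succ']⟩

theorem prod_ne {H : Type} [Group H] [DecidableEq H] {i j : Fin 2}
    (w : Monoid.CoprodI.NeWord (fun _ : Fin 2 => H) i j)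
    {X Y : Monoid.CoprodI (fun _ : Fin 2 => H)} (hw : w.prod = X * Y⁻¹) : X ≠ Y := by
  intro hXY
  exact neword_prod_ne_one w (by rw [hw, hXY, mul_inv_cancel])

theorem artin_rep_B2 {H : Type} [Group H] (h : H) (hh : h ≠ 1)
    (ρ : BraidGroup (2 - 1) →* MulAut (Monoid.CoprodI (fun _ : Fin 2 => H)))
    (hρ : IsArtinRep (n := 2) h ρ) :
    (∀ l : ℤ, l ≠ 0 →
      ρ (braidGen (⟨0, by omega⟩ : Fin (2 - 1)) ^ (2 * l))
          (Monoid.CoprodI.of (i := (0 : Fin 2)) h) =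
        (Monoid.CoprodI.of (i := (1 : Fin 2)) h * Monoid.CoprodI.of (i := (0 : Fin 2)) h) ^ (-l) *
          Monoid.CoprodI.of (i := (0 : Fin 2)) h *
          (Monoid.CoprodI.of (i := (1 : Fin 2)) h * Monoid.CoprodI.of (i := (0 : Fin 2)) h) ^ l ∧
      ρ (braidGen (⟨0, by omega⟩ : Fin (2 - 1)) ^ (2 * l))
          (Monoid.CoprodI.of (i := (0 : Fin 2)) h) ≠
        Monoid.CoprodI.of (i := (0 : Fin 2)) h) ∧
    (∀ l : ℤ,
      ρ (braidGen (⟨0, by omega⟩ : Fin (2 - 1)) ^ (2 * l + 1))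
          (Monoid.CoprodI.of (i := (0 : Fin 2)) h) =
        (Monoid.CoprodI.of (i := (1 : Fin 2)) h * Monoid.CoprodI.of (i := (0 : Fin 2)) h) ^ (-l) *
          ((Monoid.CoprodI.of (i := (0 : Fin 2)) h)⁻¹ * Monoid.CoprodI.of (i := (1 : Fin 2)) h *
            Monoid.CoprodI.of (i := (0 : Fin 2)) h) *
          (Monoid.CoprodI.of (i := (1 : Fin 2)) h * Monoid.CoprodI.of (i := (0 : Fin 2)) h) ^ l ∧
      ρ (braidGen (⟨0, by omega⟩ : Fin (2 - 1)) ^ (2 * l + 1))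
          (Monoid.CoprodI.of (i := (0 : Fin 2)) h) ≠
        Monoid.CoprodI.of (i := (0 : Fin 2)) h) ∧
    Function.Injective ρ := by
  classical
  obtain ⟨hρ0, hρ1, -⟩ := hρ ⟨0, by omega⟩
  have e0 : idx0 (⟨0, by omega⟩ : Fin (2 - 1)) = (0 : Fin 2) := rfl
  have e1 : idx1 (⟨0, by omega⟩ : Fin (2 - 1)) = (1 : Fin 2) := rfl
  rw [e0, e1] at hρ0
  rw [e0, e1] at hρ1
  have hinv : h⁻¹ ≠ 1 := inv_ne_one.mpr hh
  set a : Monoid.CoprodI (fun _ : Fin 2 => H) := Monoid.CoprodI.of (i := (0 : Fin 2)) h with ha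
  set b : Monoid.CoprodI (fun _ : Fin 2 => H) := Monoid.CoprodI.of (i := (1 : Fin 2)) h with hb
  set c := b * a with hc
  set σ := braidGen (⟨0, by omega⟩ : Fin (2 - 1)) with hσdef
  have hofinv0 : Monoid.CoprodI.of (M := fun _ : Fin 2 => H) (i := (0 : Fin 2)) h⁻¹ = a⁻¹ :=
    map_inv _ h
  have hofinv1 : Monoid.CoprodI.of (M := fun _ : Fin 2 => H) (i := (1 : Fin 2)) h⁻¹ = b⁻¹ :=
    map_inv _ h
  have hτa : ρ σ a = a⁻¹ * b * a := hρ0 h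
  have hτb : ρ σ b = a := by rw [hρ1 h]; show a * a * a⁻¹ = a; group
  have appmul : ∀ (g : BraidGroup (2 - 1)) (x y : Monoid.CoprodI (fun _ : Fin 2 => H)),
      ρ g (x * y) = ρ g x * ρ g y := fun g x y => map_mul (ρ g) x y
  have appinv : ∀ (g : BraidGroup (2 - 1)) (x : Monoid.CoprodI (fun _ : Fin 2 => H)),
      ρ g x⁻¹ = (ρ g x)⁻¹ := fun g x => map_inv (ρ g) x
  have appzpow : ∀ (g : BraidGroup (2 - 1)) (x : Monoid.CoprodI (fun _ : Fin 2 => H)) (n : ℤ),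
      ρ g (x ^ n) = (ρ g x) ^ n := fun g x n => map_zpow (ρ g) x n
  have hτc : ρ σ c = c := by rw [hc, appmul, hτa, hτb]; group
  have happ : ∀ (k m : ℤ) (x), ρ (σ ^ (k + m)) x = ρ (σ ^ k) (ρ (σ ^ m) x) := by
    intro k m x; rw [zpow_add, map_mul, MulAut.mul_apply]
  have hστc : ∀ k : ℤ, ρ (σ ^ k) c = c := by
    intro k; induction k using Int.induction_on with
    | zero => simp
    | succ n ih => rw [show ((n : ℤ) + 1) = 1 + n by ring, happ, ih, zpow_one, hτc]
    | pred n ih =>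
      rw [show (-(n : ℤ) - 1) = (-1) + (-n) by ring, happ, ih]
      have h5 : ρ (σ ^ (-1 : ℤ)) (ρ (σ ^ (1 : ℤ)) c) = c := by
        rw [← happ]; norm_num
      rwa [zpow_one, hτc] at h5
  have hστ2a : ρ (σ ^ (2 : ℤ)) a = c⁻¹ * a * c := by
    rw [show (2 : ℤ) = 1 + 1 from rfl, happ, zpow_one, hτa, appmul, appmul, appinv,
      hτa, hτb, hc]
    group
  have hστ2a' : ρ (σ ^ (-2 : ℤ)) a = c * a * c⁻¹ := by
    have h5 : ρ (σ ^ (-2 : ℤ)) (ρ (σ ^ (2 : ℤ)) a) = a := by rw [← happ]; norm_num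
    rw [hστ2a, appmul, appmul, appinv, hστc] at h5
    calc ρ (σ ^ (-2 : ℤ)) a = c * (c⁻¹ * ρ (σ ^ (-2 : ℤ)) a * c) * c⁻¹ := by group
    _ = c * a * c⁻¹ := by rw [h5]
  have keyEven : ∀ l : ℤ, ρ (σ ^ (2 * l)) a = c ^ (-l) * a * c ^ l := by
    intro l; induction l using Int.induction_on with
    | zero => simp
    | succ n ih =>
      rw [show 2 * ((n : ℤ) + 1) = 2 + 2 * n by ring, happ, ih, appmul, appmul,
        appzpow, appzpow, hστc, hστ2a]
      group
    | pred n ih =>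
      rw [show 2 * (-(n : ℤ) - 1) = (-2) + 2 * (-n) by ring, happ, ih, appmul, appmul,
        appzpow, appzpow, hστc, hστ2a']
      group
  have keyOdd : ∀ l : ℤ, ρ (σ ^ (2 * l + 1)) a = c ^ (-l) * (a⁻¹ * b * a) * c ^ l := by
    intro l
    rw [show 2 * l + 1 = 1 + 2 * l by ring, happ, keyEven, appmul, appmul,
      appzpow, appzpow, zpow_one, hτc, hτa]
  -- word-based inequalities
  have neE : ∀ m : ℕ, a * c ^ (m + 1) ≠ c ^ (m + 1) * a := by
    intro m heq
    obtain ⟨w1, hw1⟩ := exists_alt 1 0 (by decide) h h hh hh m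
    obtain ⟨w2, hw2⟩ := exists_alt 1 0 (by decide) h⁻¹ h⁻¹ hinv hinv m
    refine prod_ne (w1.append (by decide : (0 : Fin 2) ≠ 1) w2)
      (X := c ^ (m + 1) * a * (c ^ (m + 1))⁻¹) (Y := a) ?_ ?_
    · rw [Monoid.CoprodI.NeWord.append_prod, hw1, hw2, hofinv0, hofinv1, ← ha, ← hb, ← hc]
      have k1 : (b⁻¹ * a⁻¹ : Monoid.CoprodI (fun _ : Fin 2 => H)) = a * c⁻¹ * a⁻¹ := by
        rw [hc]; group
      rw [k1, conj_pow, inv_pow]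
      simp [mul_assoc]
    · rw [← heq]; group
  have neO0 : a⁻¹ * b * a ≠ a := by
    refine prod_ne (Monoid.CoprodI.NeWord.append
      (Monoid.CoprodI.NeWord.singleton (i := (0 : Fin 2)) h⁻¹ hinv) (by decide)
      (Monoid.CoprodI.NeWord.singleton (i := (1 : Fin 2)) h hh)) ?_
    rw [Monoid.CoprodI.NeWord.append_prod, Monoid.CoprodI.NeWord.prod_singleton,
      Monoid.CoprodI.NeWord.prod_singleton, hofinv0, ← hb]
    group
  have neOp : ∀ m : ℕ, (c ^ (m + 1))⁻¹ * (a⁻¹ * b * a) * c ^ (m + 1) ≠ a := by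
    intro m
    obtain ⟨w1, hw1⟩ := exists_alt 0 1 (by decide) h⁻¹ h⁻¹ hinv hinv m
    obtain ⟨w2, hw2⟩ := exists_alt 0 1 (by decide) h h hh hh m
    refine prod_ne (w1.append (by decide : (1 : Fin 2) ≠ 0)
      ((Monoid.CoprodI.NeWord.append
        (Monoid.CoprodI.NeWord.singleton (i := (0 : Fin 2)) h⁻¹ hinv) (by decide)
        (Monoid.CoprodI.NeWord.singleton (i := (1 : Fin 2)) h hh)).append
          (by decide : (1 : Fin 2) ≠ 0) w2)) ?_
    rw [Monoid.CoprodI.NeWord.append_prod, Monoid.CoprodI.NeWord.append_prod,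
      Monoid.CoprodI.NeWord.append_prod, Monoid.CoprodI.NeWord.prod_singleton,
      Monoid.CoprodI.NeWord.prod_singleton, hw1, hw2, hofinv0, hofinv1, ← ha, ← hb]
    have k1 : (a⁻¹ * b⁻¹ : Monoid.CoprodI (fun _ : Fin 2 => H)) = c⁻¹ := by rw [hc]; group
    have k2 : (a * b : Monoid.CoprodI (fun _ : Fin 2 => H)) = a * c * a⁻¹ := by
      rw [hc]; group
    rw [k1, k2, conj_pow, inv_pow]
    simp [mul_assoc]
  have neOm : ∀ m : ℕ, c ^ (m + 1) * (a⁻¹ * b * a) * (c ^ (m + 1))⁻¹ ≠ a := by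
    intro m
    have k1 : (b⁻¹ * a⁻¹ : Monoid.CoprodI (fun _ : Fin 2 => H)) = a * c⁻¹ * a⁻¹ := by
      rw [hc]; group
    cases m with
    | zero =>
      refine prod_ne (Monoid.CoprodI.NeWord.append
        (Monoid.CoprodI.NeWord.singleton (i := (1 : Fin 2)) h hh) (by decide)
        (Monoid.CoprodI.NeWord.singleton (i := (0 : Fin 2)) h⁻¹ hinv)) ?_
      rw [Monoid.CoprodI.NeWord.append_prod, Monoid.CoprodI.NeWord.prod_singleton,
        Monoid.CoprodI.NeWord.prod_singleton, hofinv0, ← hb, hc]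
      group
    | succ k =>
      obtain ⟨w1, hw1⟩ := exists_alt 1 0 (by decide) h h hh hh k
      obtain ⟨w2, hw2⟩ := exists_alt 1 0 (by decide) h⁻¹ h⁻¹ hinv hinv k
      refine prod_ne (w1.append (by decide : (0 : Fin 2) ≠ 1)
        ((Monoid.CoprodI.NeWord.append
          (Monoid.CoprodI.NeWord.singleton (i := (1 : Fin 2)) h hh) (by decide)
          (Monoid.CoprodI.NeWord.singleton (i := (0 : Fin 2)) h⁻¹ hinv)).append
            (by decide : (0 : Fin 2) ≠ 1) w2)) ?_
      rw [Monoid.CoprodI.NeWord.append_prod, Monoid.CoprodI.NeWord.append_prod,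
        Monoid.CoprodI.NeWord.append_prod, Monoid.CoprodI.NeWord.prod_singleton,
        Monoid.CoprodI.NeWord.prod_singleton, hw1, hw2, hofinv0, hofinv1, ← ha, ← hb, ← hc]
      rw [k1, conj_pow, inv_pow]
      rw [show k + 1 + 1 = (k + 1) + 1 from rfl, pow_succ c (k + 1)]
      have k3 : b = c * a⁻¹ := by rw [hc]; group
      rw [k3]
      group
  -- the two non-identity statements
  have part1ne : ∀ l : ℤ, l ≠ 0 → ρ (σ ^ (2 * l)) a ≠ a := by
    intro l hl heq
    rw [keyEven l] at heq
    have h2 : a * c ^ l = c ^ l * (c ^ (-l) * a * c ^ l) := by group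
    rw [heq] at h2
    rcases lt_or_gt_of_ne hl with hneg | hpos
    · obtain ⟨m, rfl⟩ : ∃ m : ℕ, l = -((m : ℕ) + 1 : ℕ) := ⟨(-l - 1).toNat, by omega⟩
      rw [zpow_neg, zpow_natCast] at h2
      have hC : Commute a ((c ^ (m + 1))⁻¹) := h2
      have hC2 : Commute a (c ^ (m + 1)) := by simpa using hC.inv_right
      exact neE m hC2
    · obtain ⟨m, rfl⟩ : ∃ m : ℕ, l = ((m : ℕ) + 1 : ℕ) := ⟨(l - 1).toNat, by omega⟩
      rw [zpow_natCast] at h2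
      exact neE m h2
  have part2ne : ∀ l : ℤ, ρ (σ ^ (2 * l + 1)) a ≠ a := by
    intro l heq
    rw [keyOdd l] at heq
    rcases lt_trichotomy l 0 with hneg | rfl | hpos
    · obtain ⟨m, rfl⟩ : ∃ m : ℕ, l = -((m : ℕ) + 1 : ℕ) := ⟨(-l - 1).toNat, by omega⟩
      rw [neg_neg, zpow_neg, zpow_natCast] at heq
      exact neOm m heq
    · simp only [neg_zero, zpow_zero, one_mul, mul_one] at heq
      exact neO0 heq
    · obtain ⟨m, rfl⟩ : ∃ m : ℕ, l = ((m : ℕ) + 1 : ℕ) := ⟨(l - 1).toNat, by omega⟩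
      rw [zpow_neg, zpow_natCast] at heq
      exact neOp m heq
  -- surjectivity of powers of σ
  have hsurj : ∀ x : BraidGroup (2 - 1), ∃ k : ℤ, x = σ ^ k := by
    intro x
    have h1 : x ∈ Subgroup.zpowers σ := by
      have h3 : Set.range (PresentedGroup.of : Fin (2 - 1) → BraidGroup (2 - 1)) ⊆
          (Subgroup.zpowers σ : Set (BraidGroup (2 - 1))) := by
        rintro _ ⟨i, rfl⟩
        have hi : i = ⟨0, by omega⟩ := by
          have := i.2
          exact Fin.ext (by omega)
        rw [hi]
        exact Subgroup.mem_zpowers σ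
      have h4 : Subgroup.closure (Set.range (PresentedGroup.of :
          Fin (2 - 1) → BraidGroup (2 - 1))) ≤ Subgroup.zpowers σ :=
        (Subgroup.closure_le _).mpr h3
      rw [PresentedGroup.closure_range_of] at h4
      exact h4 trivial
    obtain ⟨k, hk⟩ := Subgroup.mem_zpowers_iff.mp h1
    exact ⟨k, hk.symm⟩
  refine ⟨fun l hl => ⟨keyEven l, part1ne l hl⟩, fun l => ⟨keyOdd l, part2ne l⟩, ?_⟩
  rw [injective_iff_map_eq_one]
  intro x hx
  obtain ⟨k, rfl⟩ := hsurj x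
  rcases Int.even_or_odd k with ⟨m, hm⟩ | ⟨m, hm⟩
  · by_cases hm0 : m = 0
    · rw [hm, hm0]; norm_num
    · exfalso
      apply part1ne m hm0
      rw [show 2 * m = k by omega, hx]
      rfl
  · exfalso
    apply part2ne m
    rw [← hm, hx]
    rfl
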